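/- Let A be a symmetric positive semidefinite 3×3 matrix, let z > 0 and a > 0 be real numbers. Then Y := (1/(2a))[−z·1 + (z²·1 + 4a·A)^{1/2}] (using the principal square root of the symmetric positive definite matrix z²·1 + 4a·A) is symmetric positive semidefinite and satisfies the quadratic matrix equation z·Y = A − a·Y². Moreover, Y commutes with A. -/

import Mathlib

open Matrix

section OldSqrt

open scoped ComplexOrder

/-- The positive semidefinite square root of a positive semidefinite matrix
(the definition `Matrix.PosSemidef.sqrt` of Mathlib, Dec 2024, since removed). -/
noncomputable def Matrix.PosSemidef.sqrt {n : Type*} [Fintype n] [DecidableEq n]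
    {𝕜 : Type*} [RCLike 𝕜] {A : Matrix n n 𝕜} (hA : A.PosSemidef) : Matrix n n 𝕜 :=
  hA.1.eigenvectorUnitary.1 * diagonal ((↑) ∘ (√·) ∘ hA.1.eigenvalues) *
  (star hA.1.eigenvectorUnitary : Matrix n n 𝕜)

end OldSqrt

open scoped ComplexOrder in
theorem Matrix.PosSemidef.sqrt_mul_self {n : Type*} [Fintype n] [DecidableEq n]
    {𝕜 : Type*} [RCLike 𝕜] {A : Matrix n n 𝕜} (hA : A.PosSemidef) : hA.sqrt * hA.sqrt = A := by
  have hU : (star (hA.1.eigenvectorUnitary : Matrix n n 𝕜)) * hA.1.eigenvectorUnitary = 1 :=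
    Unitary.coe_star_mul_self _
  have hD : diagonal (((↑) ∘ (√·) ∘ hA.1.eigenvalues) : n → 𝕜) *
      diagonal ((↑) ∘ (√·) ∘ hA.1.eigenvalues) = diagonal (RCLike.ofReal ∘ hA.1.eigenvalues) := by
    rw [diagonal_mul_diagonal]; congr 1; funext i
    simp only [Function.comp]
    rw [← RCLike.ofReal_mul, Real.mul_self_sqrt (hA.eigenvalues_nonneg i)]
  conv_rhs => rw [hA.1.spectral_theorem, Unitary.conjStarAlgAut_apply]
  unfold Matrix.PosSemidef.sqrt
  rw [← hD]
  calc _ = (hA.1.eigenvectorUnitary : Matrix n n 𝕜) * diagonal (((↑) ∘ (√·) ∘ hA.1.eigenvalues) : n → 𝕜) *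
        (star (hA.1.eigenvectorUnitary : Matrix n n 𝕜) * (hA.1.eigenvectorUnitary : Matrix n n 𝕜)) *
        diagonal ((↑) ∘ (√·) ∘ hA.1.eigenvalues) * star (hA.1.eigenvectorUnitary : Matrix n n 𝕜) := by
        simp only [mul_assoc]
    _ = _ := by rw [hU, mul_one]; simp only [mul_assoc]


lemma eig_lb (M : Matrix (Fin 3) (Fin 3) ℝ) (hM : M.PosSemidef) (c : ℝ)
    (h : (M - c ^ 2 • 1).PosSemidef) (i : Fin 3) : c ^ 2 ≤ hM.1.eigenvalues i := by
  set v : Fin 3 → ℝ := ⇑(hM.1.eigenvectorBasis i) with hv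
  have hv1 : star v ⬝ᵥ v = 1 := by
    have h1 : ‖hM.1.eigenvectorBasis i‖ = 1 := hM.1.eigenvectorBasis.orthonormal.1 i
    have h2 : (inner (𝕜 := ℝ) (hM.1.eigenvectorBasis i) (hM.1.eigenvectorBasis i)) = 1 := by
      rw [real_inner_self_eq_norm_sq, h1]; norm_num
    rw [EuclideanSpace.inner_eq_star_dotProduct] at h2
    exact h2
  have h0 := h.dotProduct_mulVec_nonneg v
  rw [sub_mulVec, smul_mulVec, one_mulVec, dotProduct_sub, dotProduct_smul, hv1,
    smul_eq_mul, mul_one] at h0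
  have he := hM.1.eigenvalues_eq i
  simp only [RCLike.re_to_real] at he
  rw [← hv] at he
  rw [he]
  linarith

lemma sqrt_shift (M : Matrix (Fin 3) (Fin 3) ℝ) (hM : M.PosSemidef) (c : ℝ) (hc : 0 ≤ c)
    (h : (M - c ^ 2 • 1).PosSemidef) :
    (hM.sqrt - c • (1 : Matrix (Fin 3) (Fin 3) ℝ)).PosSemidef := by
  set U : Matrix (Fin 3) (Fin 3) ℝ := (hM.1.eigenvectorUnitary : Matrix (Fin 3) (Fin 3) ℝ) with hU
  have hUs : U * star U = 1 := (Matrix.mem_unitaryGroup_iff).mp hM.1.eigenvectorUnitary.2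
  have key : hM.sqrt - c • (1 : Matrix (Fin 3) (Fin 3) ℝ) =
      U * diagonal (fun i => Real.sqrt (hM.1.eigenvalues i) - c) * star U := by
    have h1 : (diagonal (fun i => Real.sqrt (hM.1.eigenvalues i) - c) : Matrix (Fin 3) (Fin 3) ℝ)
        = diagonal (fun i => Real.sqrt (hM.1.eigenvalues i)) - c • 1 := by
      ext i j
      by_cases hij : i = j <;> simp [Matrix.one_apply, hij]
    rw [h1, Matrix.mul_sub, Matrix.sub_mul, Matrix.mul_smul, Matrix.mul_one, Matrix.smul_mul, hUs]
    rw [Matrix.PosSemidef.sqrt]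
    rfl
  rw [key]
  rw [star_eq_conjTranspose]
  exact Matrix.PosSemidef.mul_mul_conjTranspose_same (Matrix.posSemidef_diagonal_iff.mpr
    fun i => sub_nonneg.mpr ((Real.le_sqrt hc (hM.eigenvalues_nonneg i)).mpr (eig_lb M hM c h i))) U

lemma psd_smul (c : ℝ) (hc : 0 ≤ c) {A : Matrix (Fin 3) (Fin 3) ℝ} (hA : A.PosSemidef) :
    (c • A).PosSemidef := by
  refine Matrix.PosSemidef.of_dotProduct_mulVec_nonneg ?_ fun x => ?_
  · unfold Matrix.IsHermitian
    rw [conjTranspose_smul, hA.1.eq]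
    simp
  · rw [smul_mulVec, dotProduct_smul, smul_eq_mul]
    exact mul_nonneg hc (hA.dotProduct_mulVec_nonneg x)

theorem stmt4 (A : Matrix (Fin 3) (Fin 3) ℝ) (hA : A.PosSemidef)
    (z a : ℝ) (hz : 0 < z) (ha : 0 < a)
    (hM : (z ^ 2 • (1 : Matrix (Fin 3) (Fin 3) ℝ) + (4 * a) • A).PosSemidef) :
    (((1 / (2 * a)) • (-(z • (1 : Matrix (Fin 3) (Fin 3) ℝ)) + hM.sqrt)).PosSemidef) ∧
    z • ((1 / (2 * a)) • (-(z • (1 : Matrix (Fin 3) (Fin 3) ℝ)) + hM.sqrt)) =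
      A - a • ((1 / (2 * a)) • (-(z • (1 : Matrix (Fin 3) (Fin 3) ℝ)) + hM.sqrt)) ^ 2 ∧
    ((1 / (2 * a)) • (-(z • (1 : Matrix (Fin 3) (Fin 3) ℝ)) + hM.sqrt)) * A =
      A * ((1 / (2 * a)) • (-(z • (1 : Matrix (Fin 3) (Fin 3) ℝ)) + hM.sqrt)) := by
  set M : Matrix (Fin 3) (Fin 3) ℝ := z ^ 2 • 1 + (4 * a) • A with hMdef
  set S : Matrix (Fin 3) (Fin 3) ℝ := hM.sqrt with hSdef
  have hS2 : S * S = M := hM.sqrt_mul_self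
  have hsub : (M - z ^ 2 • 1).PosSemidef := by
    have : M - z ^ 2 • (1 : Matrix (Fin 3) (Fin 3) ℝ) = (4 * a) • A := by
      rw [hMdef]; abel
    rw [this]
    exact psd_smul _ (by linarith) hA
  have hSz : (S - z • (1 : Matrix (Fin 3) (Fin 3) ℝ)).PosSemidef :=
    sqrt_shift M hM z hz.le hsub
  have hrw : -(z • (1 : Matrix (Fin 3) (Fin 3) ℝ)) + S = S - z • 1 := by abel
  refine ⟨?_, ?_, ?_⟩
  · rw [hrw]
    exact psd_smul _ (by positivity) hSz
  · rw [hrw, pow_two]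
    have expand : ((1 / (2 * a)) • (S - z • (1 : Matrix (Fin 3) (Fin 3) ℝ))) *
        ((1 / (2 * a)) • (S - z • 1)) =
        (1 / (2 * a) * (1 / (2 * a))) • (M - (2 * z) • S + (z ^ 2) • 1) := by
      rw [smul_mul_smul_comm]
      congr 1
      rw [Matrix.sub_mul, Matrix.mul_sub, Matrix.mul_sub, hS2, Matrix.smul_mul,
        Matrix.mul_smul, Matrix.smul_mul, Matrix.mul_one, Matrix.one_mul]
      simp only [Matrix.one_mul]
      module
    rw [expand, hMdef]
    rw [show (z:ℝ) ^ 2 • (1 : Matrix (Fin 3) (Fin 3) ℝ) + (4 * a) • A - (2 * z) • S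
        + z ^ 2 • 1 = (4 * a) • A - (2 * z) • S + (2 * z ^ 2) • 1 by module]
    have ha' : (a : ℝ) ≠ 0 := ne_of_gt ha
    match_scalars <;> field_simp <;> ring
  · rw [hrw]
    have hcomm : S * A = A * S := by
      have h4 : (4 * a) • A = S * S - z ^ 2 • (1 : Matrix (Fin 3) (Fin 3) ℝ) := by
        rw [hS2, hMdef]; abel
      have : S * ((4 * a) • A) = ((4 * a) • A) * S := by
        rw [h4, Matrix.mul_sub, Matrix.sub_mul, Matrix.mul_smul, Matrix.smul_mul,
          Matrix.mul_one, Matrix.one_mul, mul_assoc]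
      rw [Matrix.mul_smul, Matrix.smul_mul] at this
      have h4a : (4 * a : ℝ) ≠ 0 := by positivity
      exact smul_right_injective _ h4a this
    rw [Matrix.smul_mul, Matrix.mul_smul]
    congr 1
    rw [Matrix.sub_mul, Matrix.mul_sub, hcomm, Matrix.smul_mul, Matrix.mul_smul,
      Matrix.one_mul, Matrix.mul_one]
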